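/- Let F : ℝᵈ → ℝ be differentiable with L-Lipschitz gradient, let C ⊆ ℝᵈ be compact convex with 0 ∈ C and diameter R, let λ ≥ 0, η > 0, g ∈ ℝᵈ, and let w ∈ ℝᵈ with λw ∈ C if λ > 0. Let v ∈ C minimize ⟨g, ·⟩ over C, and set w' = (1 − λη)w + ηv, ε̂ = g − ∇F(w), and Ψ(w) = sup_{u ∈ C} ⟨−∇F(w), u − λw⟩. Then F(w') ≤ F(w) − η·Ψ(w) + η·R·‖ε̂‖ + (L/2)·η²·R². -/

import Mathlib

open RealInnerProductSpace

/-- Smoothness descent lemma. -/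
theorem descent_aux {d : ℕ} (F : EuclideanSpace ℝ (Fin d) → ℝ)
    (gradF : EuclideanSpace ℝ (Fin d) → EuclideanSpace ℝ (Fin d)) (L : ℝ)
    (hgrad : ∀ x, HasGradientAt F (gradF x) x)
    (hL : ∀ x y, ‖gradF x - gradF y‖ ≤ L * ‖x - y‖)
    (x y : EuclideanSpace ℝ (Fin d)) :
    F y ≤ F x + ⟪gradF x, y - x⟫ + L / 2 * ‖y - x‖ ^ 2 := by
  set φ : ℝ → ℝ := fun t =>
    F (x + t • (y - x)) - t * ⟪gradF x, y - x⟫ - L / 2 * t ^ 2 * ‖y - x‖ ^ 2 with hφdef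
  have hφ : ∀ t : ℝ, HasDerivAt φ
      (⟪gradF (x + t • (y - x)) - gradF x, y - x⟫ - L * t * ‖y - x‖ ^ 2) t := by
    intro t
    have hc : HasDerivAt (fun t : ℝ => x + t • (y - x)) (y - x) t := by
      simpa using ((hasDerivAt_id t).smul_const (y - x)).const_add x
    have h1 : HasDerivAt (fun t : ℝ => F (x + t • (y - x)))
        ⟪gradF (x + t • (y - x)), y - x⟫ t := by
      have := (hgrad (x + t • (y - x))).hasFDerivAt.comp_hasDerivAt t hc
      have h := this
      simp only [InnerProductSpace.toDual_apply_apply] at h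
      exact h
    have h2 : HasDerivAt (fun t : ℝ => t * ⟪gradF x, y - x⟫) ⟪gradF x, y - x⟫ t := by
      simpa using (hasDerivAt_id t).mul_const (⟪gradF x, y - x⟫)
    have h3 : HasDerivAt (fun t : ℝ => L / 2 * t ^ 2 * ‖y - x‖ ^ 2)
        (L * t * ‖y - x‖ ^ 2) t := by
      have := ((hasDerivAt_pow 2 t).const_mul (L / 2)).mul_const (‖y - x‖ ^ 2)
      refine this.congr_deriv ?_
      ring
    have := (h1.sub h2).sub h3
    rw [inner_sub_left]
    exact this
  have hmono : AntitoneOn φ (Set.Icc 0 1) := by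
    apply antitoneOn_of_deriv_nonpos (convex_Icc 0 1)
    · exact fun t _ => ((hφ t).differentiableAt.continuousAt).continuousWithinAt
    · exact fun t _ => (hφ t).differentiableAt.differentiableWithinAt
    · intro t ht
      rw [interior_Icc] at ht
      rw [(hφ t).deriv]
      have hip : ⟪gradF (x + t • (y - x)) - gradF x, y - x⟫ ≤ L * t * ‖y - x‖ ^ 2 := by
        calc ⟪gradF (x + t • (y - x)) - gradF x, y - x⟫
            ≤ ‖gradF (x + t • (y - x)) - gradF x‖ * ‖y - x‖ := real_inner_le_norm _ _
          _ ≤ (L * ‖(x + t • (y - x)) - x‖) * ‖y - x‖ := by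
              apply mul_le_mul_of_nonneg_right (hL _ _) (norm_nonneg _)
          _ = L * t * ‖y - x‖ ^ 2 := by
              rw [add_sub_cancel_left, norm_smul, Real.norm_eq_abs,
                abs_of_pos ht.1]
              ring
      linarith
  have key := hmono (Set.left_mem_Icc.2 zero_le_one) (Set.right_mem_Icc.2 zero_le_one)
    zero_le_one
  simp only [hφdef, one_smul, zero_smul, add_zero, add_sub_cancel, one_pow, zero_pow,
    one_mul, zero_mul, mul_zero, sub_zero] at key
  linarith

/-- Descent rule for one LMO step with the regularized support function
`Ψ(w) = ⨆ u ∈ C, ⟪-∇F(w), u - λ • w⟫`. -/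
theorem stmt1 {d : ℕ} (F : EuclideanSpace ℝ (Fin d) → ℝ)
    (gradF : EuclideanSpace ℝ (Fin d) → EuclideanSpace ℝ (Fin d))
    (L : ℝ) (C : Set (EuclideanSpace ℝ (Fin d))) (R lam η : ℝ)
    (g v w : EuclideanSpace ℝ (Fin d))
    (hgrad : ∀ x, HasGradientAt F (gradF x) x)
    (hL : ∀ x y, ‖gradF x - gradF y‖ ≤ L * ‖x - y‖)
    (hconv : Convex ℝ C) (hcomp : IsCompact C)
    (h0 : (0 : EuclideanSpace ℝ (Fin d)) ∈ C) (hR : Metric.diam C = R)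
    (hlam : 0 ≤ lam) (hη : 0 < η)
    (hwfeas : lam = 0 ∨ (0 < lam ∧ lam • w ∈ C))
    (hvC : v ∈ C) (hvmin : ∀ u ∈ C, ⟪g, v⟫ ≤ ⟪g, u⟫) :
    F ((1 - lam * η) • w + η • v)
      ≤ F w - η * (⨆ u : C, ⟪-(gradF w), (u : EuclideanSpace ℝ (Fin d)) - lam • w⟫)
        + η * R * ‖g - gradF w‖ + (L / 2) * η ^ 2 * R ^ 2 := by
  have hCne : Nonempty C := ⟨⟨0, h0⟩⟩
  have hlwC : lam • w ∈ C := by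
    rcases hwfeas with h | h
    · simpa [h] using h0
    · exact h.2
  have hRnn : 0 ≤ R := hR ▸ Metric.diam_nonneg
  -- diameter bounds
  have hdiam : ∀ a ∈ C, ∀ b ∈ C, ‖a - b‖ ≤ R := by
    intro a ha b hb
    rw [← hR, ← dist_eq_norm]
    exact Metric.dist_le_diam_of_mem hcomp.isBounded ha hb
  have hvlw : ‖v - lam • w‖ ≤ R := hdiam v hvC _ hlwC
  -- sup bound
  have hsup : (⨆ u : C, ⟪-(gradF w), (u : EuclideanSpace ℝ (Fin d)) - lam • w⟫)
      ≤ ⟪-(gradF w), v - lam • w⟫ + R * ‖g - gradF w‖ := by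
    apply ciSup_le
    intro u
    have h1 : ⟪g, v⟫ ≤ ⟪g, (u : EuclideanSpace ℝ (Fin d))⟫ := hvmin _ u.2
    have h2 : ⟪g - gradF w, (u : EuclideanSpace ℝ (Fin d)) - v⟫
        ≤ ‖g - gradF w‖ * ‖(u : EuclideanSpace ℝ (Fin d)) - v‖ := real_inner_le_norm _ _
    have h3 : ‖(u : EuclideanSpace ℝ (Fin d)) - v‖ ≤ R := hdiam _ u.2 v hvC
    have h4 : ‖g - gradF w‖ * ‖(u : EuclideanSpace ℝ (Fin d)) - v‖
        ≤ ‖g - gradF w‖ * R := mul_le_mul_of_nonneg_left h3 (norm_nonneg _)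
    have hexp : ⟪-(gradF w), (u : EuclideanSpace ℝ (Fin d)) - lam • w⟫
        - ⟪-(gradF w), v - lam • w⟫
        = (⟪g, v⟫ - ⟪g, (u : EuclideanSpace ℝ (Fin d))⟫)
          + ⟪g - gradF w, (u : EuclideanSpace ℝ (Fin d)) - v⟫ := by
      simp only [inner_sub_left, inner_sub_right, inner_neg_left]
      ring
    nlinarith [h1, h2, h3, h4]
  -- descent lemma
  have hdesc := descent_aux F gradF L hgrad hL w ((1 - lam * η) • w + η • v)
  have hdiff : (1 - lam * η) • w + η • v - w = η • (v - lam • w) := by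
    rw [smul_sub, sub_smul, one_smul, smul_smul, mul_comm η lam]
    abel
  rw [hdiff] at hdesc
  have hip : ⟪gradF w, η • (v - lam • w)⟫ = -(η * ⟪-(gradF w), v - lam • w⟫) := by
    rw [real_inner_smul_right, inner_neg_left]
    ring
  have hnorm : ‖η • (v - lam • w)‖ ^ 2 = η ^ 2 * ‖v - lam • w‖ ^ 2 := by
    rw [norm_smul, Real.norm_eq_abs, abs_of_pos hη, mul_pow]
  -- handle possible negative L (only possible when space is trivial)
  have hsq : L / 2 * (η ^ 2 * ‖v - lam • w‖ ^ 2) ≤ L / 2 * η ^ 2 * R ^ 2 := by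
    rcases le_or_gt 0 L with hL0 | hL0
    · have h1 : ‖v - lam • w‖ ^ 2 ≤ R ^ 2 := by nlinarith [norm_nonneg (v - lam • w)]
      have h2 : (0:ℝ) ≤ L / 2 * η ^ 2 := mul_nonneg (by linarith) (sq_nonneg η)
      nlinarith [mul_le_mul_of_nonneg_left h1 h2]
    · have hsub : ∀ a b : EuclideanSpace ℝ (Fin d), a = b := by
        intro a b
        by_contra hne
        have h1 := hL a b
        have h2 : 0 < ‖a - b‖ := by
          rw [norm_pos_iff]; exact sub_ne_zero.2 hne
        nlinarith [norm_nonneg (gradF a - gradF b)]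
      have hR0 : R = 0 := by
        rw [← hR]
        exact Metric.diam_subsingleton (fun a _ b _ => hsub a b)
      have hv0 : v - lam • w = 0 := hsub _ _
      simp [hR0, hv0]
  have hsup' : -(η * (⨆ u : C, ⟪-(gradF w), (u : EuclideanSpace ℝ (Fin d)) - lam • w⟫))
      ≥ -(η * (⟪-(gradF w), v - lam • w⟫ + R * ‖g - gradF w‖)) := by
    have := mul_le_mul_of_nonneg_left hsup hη.le
    linarith
  rw [hip, hnorm] at hdesc
  calc F ((1 - lam * η) • w + η • v)
      ≤ F w + -(η * ⟪-(gradF w), v - lam • w⟫) + L / 2 * (η ^ 2 * ‖v - lam • w‖ ^ 2) :=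
        hdesc
    _ ≤ F w - η * (⨆ u : C, ⟪-(gradF w), (u : EuclideanSpace ℝ (Fin d)) - lam • w⟫)
        + η * R * ‖g - gradF w‖ + (L / 2) * η ^ 2 * R ^ 2 := by
        have := hsup'
        nlinarith [hsq]
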